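/- Let K : ℝ → ℝ be a nonnegative probability density bounded by M_K, and let Y be a real random variable. Let B(x) := K(x - Y) V - E[K(x - Y) V] for any random variable V with 0 ≤ V ≤ 1 measurable with respect to Y. If Y¹,…,Yᴺ are i.i.d. copies of Y and Vⁱ = v(Yⁱ) with 0 ≤ v ≤ 1, then ∫_ℝ E[ ( (1/N) Σⱼ K(x-Yʲ)v(Yʲ) - E[K(x-Y)v(Y)])² ] dx ≤ M_K / N. -/

import Mathlib

open MeasureTheory ProbabilityTheory

theorem empirical_kernel_variance_bound
    {Ω : Type*} [MeasurableSpace Ω] (P : Measure Ω) [IsProbabilityMeasure P]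
    (N : ℕ) (hN : 1 ≤ N) (MK : ℝ)
    (K : ℝ → ℝ) (hKm : Measurable K) (hKnn : ∀ x, 0 ≤ K x) (hKb : ∀ x, K x ≤ MK)
    (hKdens : ∫ x, K x = 1)
    (v : ℝ → ℝ) (hvm : Measurable v) (hv : ∀ x, v x ∈ Set.Icc (0:ℝ) 1)
    (Y : Fin N → Ω → ℝ) (hYm : ∀ i, Measurable (Y i))
    (hindep : iIndepFun Y P)
    (ν : Measure ℝ) [IsProbabilityMeasure ν] (hlaw : ∀ i, P.map (Y i) = ν) :
    (∫ x : ℝ, ∫ ω,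
        ((1 / N : ℝ) * ∑ j, K (x - Y j ω) * v (Y j ω)
          - ∫ y, K (x - y) * v y ∂ν) ^ 2 ∂P)
      ≤ MK / N := by
  classical
  have hNpos : (0:ℝ) < N := by exact_mod_cast hN
  have hMK0 : (0:ℝ) ≤ MK := le_trans (hKnn 0) (hKb 0)
  set f : ℝ → ℝ → ℝ := fun x y => K (x - y) * v y with hfdef
  have hfmx : ∀ x, Measurable (f x) := fun x =>
    (hKm.comp (measurable_const.sub measurable_id)).mul hvm
  have hf_nn : ∀ x y, 0 ≤ f x y := fun x y => mul_nonneg (hKnn _) (hv y).1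
  have hf_le : ∀ x y, f x y ≤ MK := fun x y => by
    calc K (x - y) * v y ≤ MK * 1 :=
      mul_le_mul (hKb _) (hv y).2 (hv y).1 hMK0
    _ = MK := mul_one _
  set μf : ℝ → ℝ := fun x => ∫ y, f x y ∂ν with hμfdef
  have hμf_nn : ∀ x, 0 ≤ μf x := fun x => integral_nonneg (hf_nn x)
  have hf_int : ∀ x, Integrable (f x) ν := fun x =>
    (memLp_of_bounded (ae_of_all _ fun y => Set.mem_Icc.2 ⟨hf_nn x y, hf_le x y⟩)
      (hfmx x).aestronglyMeasurable 1).integrable le_rfl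
  have hf2_int : ∀ x, Integrable (fun y => (f x y) ^ 2) ν := fun x =>
    (memLp_of_bounded (ae_of_all _ fun y =>
      Set.mem_Icc.2 ⟨sq_nonneg _, by
        calc (f x y)^2 ≤ MK^2 := by
              apply sq_le_sq' (by linarith [hf_nn x y, hf_le x y]) (hf_le x y)
        _ = MK^2 := rfl⟩)
      ((hfmx x).pow_const 2).aestronglyMeasurable 1).integrable le_rfl
  -- Step A: pointwise bound
  have hA : ∀ x : ℝ,
      (∫ ω, ((1 / N : ℝ) * ∑ j, f x (Y j ω) - μf x) ^ 2 ∂P) ≤ (MK / N) * μf x := by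
    intro x
    set c : ℝ := μf x with hc
    set g : Fin N → Ω → ℝ := fun j ω => f x (Y j ω) with hg
    have hgm : ∀ j, Measurable (g j) := fun j => (hfmx x).comp (hYm j)
    have hgℒ2 : ∀ j, MemLp (g j) 2 P := fun j =>
      memLp_of_bounded (ae_of_all _ fun ω => Set.mem_Icc.2 ⟨hf_nn _ _, hf_le _ _⟩)
        (hgm j).aestronglyMeasurable 2
    have hEg : ∀ j, ∫ ω, g j ω ∂P = c := by
      intro j
      have : ∫ ω, f x (Y j ω) ∂P = ∫ y, f x y ∂(P.map (Y j)) :=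
        (integral_map (hYm j).aemeasurable (hfmx x).aestronglyMeasurable).symm
      rw [hg]; rw [this, hlaw j]
    have hEg2 : ∀ j, ∫ ω, (g j ω) ^ 2 ∂P = ∫ y, (f x y) ^ 2 ∂ν := by
      intro j
      have : ∫ ω, (f x (Y j ω))^2 ∂P = ∫ y, (f x y)^2 ∂(P.map (Y j)) :=
        (integral_map (hYm j).aemeasurable
          ((hfmx x).pow_const 2).aestronglyMeasurable).symm
      rw [hg]; rw [this, hlaw j]
    -- the averaged variable
    set X : Ω → ℝ := (N:ℝ)⁻¹ • (∑ j, g j) with hX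
    have hXℒ2 : MemLp X 2 P := (memLp_finset_sum' _ fun j _ => hgℒ2 j).const_smul _
    have hsum_int : Integrable (∑ j, g j) P :=
      integrable_finset_sum' _ (fun j _ => (hgℒ2 j).integrable one_le_two)
    have hEX : ∫ ω, X ω ∂P = c := by
      simp only [hX, Pi.smul_apply, smul_eq_mul]
      rw [integral_const_mul]
      have : ∫ ω, (∑ j, g j) ω ∂P = ∑ j, ∫ ω, g j ω ∂P := by
        simp only [Finset.sum_apply]
        exact integral_finset_sum _ (fun j _ => (hgℒ2 j).integrable one_le_two)
      rw [this]
      simp only [hEg, Finset.sum_const, Finset.card_univ, Fintype.card_fin, nsmul_eq_mul]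
      field_simp
    have hrw : ∀ ω, (1 / N : ℝ) * ∑ j, f x (Y j ω) - c = X ω - c := by
      intro ω
      simp [hX, Finset.sum_apply, one_div, hg]
    have hvar : (∫ ω, (X ω - c) ^ 2 ∂P) = variance X P := by
      rw [variance_eq_integral hXℒ2.aestronglyMeasurable.aemeasurable, ← hEX]
    have hpair : Set.Pairwise ↑(Finset.univ : Finset (Fin N))
        fun i j => IndepFun (g i) (g j) P := by
      intro i _ j _ hij
      exact (hindep.indepFun hij).comp (hfmx x) (hfmx x)
    have hvarsum : variance (∑ j, g j) P = ∑ j, variance (g j) P :=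
      IndepFun.variance_sum (fun j _ => hgℒ2 j) hpair
    have hvarbound : ∀ j, variance (g j) P ≤ MK * c := by
      intro j
      calc variance (g j) P ≤ ∫ ω, (g j ω) ^ 2 ∂P :=
            variance_le_expectation_sq (hgm j).aestronglyMeasurable
        _ = ∫ y, (f x y) ^ 2 ∂ν := hEg2 j
        _ ≤ ∫ y, MK * f x y ∂ν := by
            apply integral_mono (hf2_int x) ((hf_int x).const_mul MK)
            intro y
            show f x y ^ 2 ≤ MK * f x y
            have h1 := hf_nn x y
            have h2 := hf_le x y
            nlinarith
        _ = MK * c := by rw [integral_const_mul]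
    calc (∫ ω, ((1 / N : ℝ) * ∑ j, f x (Y j ω) - c) ^ 2 ∂P)
        = ∫ ω, (X ω - c) ^ 2 ∂P := by simp_rw [hrw]
      _ = variance X P := hvar
      _ = ((N:ℝ)⁻¹) ^ 2 * variance (∑ j, g j) P := variance_smul _ _ _
      _ = ((N:ℝ)⁻¹) ^ 2 * ∑ j, variance (g j) P := by rw [hvarsum]
      _ ≤ ((N:ℝ)⁻¹) ^ 2 * (N * (MK * c)) := by
          apply mul_le_mul_of_nonneg_left _ (by positivity)
          calc ∑ j, variance (g j) P ≤ ∑ _j : Fin N, MK * c :=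
                Finset.sum_le_sum (fun j _ => hvarbound j)
            _ = N * (MK * c) := by
                simp [Finset.sum_const, Finset.card_univ, nsmul_eq_mul]
      _ = (MK / N) * c := by field_simp
  -- Step B: integrate in x
  have hμf_meas : Measurable μf := by
    apply (StronglyMeasurable.integral_prod_right ?_).measurable
    exact ((hKm.comp (measurable_fst.sub measurable_snd)).mul
      (hvm.comp measurable_snd)).stronglyMeasurable
  have hKint : Integrable K := by
    by_contra h
    rw [integral_undef h] at hKdens
    norm_num at hKdens
  have hlintK : ∫⁻ x, ENNReal.ofReal (K x) = 1 := by
    rw [← ofReal_integral_eq_lintegral_ofReal hKint (ae_of_all _ hKnn), hKdens,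
      ENNReal.ofReal_one]
  have hlint : ∫⁻ x, ENNReal.ofReal (μf x) ≤ 1 := by
    have heq : ∀ x, ENNReal.ofReal (μf x) = ∫⁻ y, ENNReal.ofReal (f x y) ∂ν := fun x =>
      ofReal_integral_eq_lintegral_ofReal (hf_int x) (ae_of_all _ (hf_nn x))
    calc ∫⁻ x, ENNReal.ofReal (μf x)
        = ∫⁻ x, ∫⁻ y, ENNReal.ofReal (f x y) ∂ν := by simp_rw [heq]
      _ = ∫⁻ y, ∫⁻ x, ENNReal.ofReal (f x y) ∂(volume) ∂ν := by
          apply lintegral_lintegral_swap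
          exact (ENNReal.measurable_ofReal.comp
            ((hKm.comp (measurable_fst.sub measurable_snd)).mul
              (hvm.comp measurable_snd))).aemeasurable
      _ ≤ ∫⁻ _y, 1 ∂ν := by
          apply lintegral_mono
          intro y
          show (∫⁻ x, ENNReal.ofReal (f x y)) ≤ 1
          have : (fun x => ENNReal.ofReal (f x y)) =
              fun x => ENNReal.ofReal (K (x - y)) * ENNReal.ofReal (v y) := by
            funext x
            rw [← ENNReal.ofReal_mul (hKnn _)]
          rw [this, lintegral_mul_const' _ _ ENNReal.ofReal_ne_top]
          rw [lintegral_sub_right_eq_self (fun x => ENNReal.ofReal (K x)) y, hlintK]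
          rw [one_mul]
          exact ENNReal.ofReal_le_one.2 (hv y).2
      _ = 1 := by simp
  have hμf_int : Integrable μf := by
    refine ⟨hμf_meas.aestronglyMeasurable, ?_⟩
    rw [hasFiniteIntegral_iff_ofReal (ae_of_all _ hμf_nn)]
    exact lt_of_le_of_lt hlint ENNReal.one_lt_top
  have hμf_integral : ∫ x, μf x ≤ 1 := by
    rw [integral_eq_lintegral_of_nonneg_ae (ae_of_all _ hμf_nn)
      hμf_meas.aestronglyMeasurable]
    calc (∫⁻ x, ENNReal.ofReal (μf x)).toReal ≤ (1 : ENNReal).toReal :=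
          ENNReal.toReal_mono ENNReal.one_ne_top hlint
      _ = 1 := by simp
  calc (∫ x : ℝ, ∫ ω,
        ((1 / N : ℝ) * ∑ j, K (x - Y j ω) * v (Y j ω)
          - ∫ y, K (x - y) * v y ∂ν) ^ 2 ∂P)
      ≤ ∫ x, (MK / N) * μf x := by
        apply integral_mono_of_nonneg
        · exact ae_of_all _ fun x => integral_nonneg fun ω => sq_nonneg _
        · exact hμf_int.const_mul _
        · exact ae_of_all _ fun x => hA x
    _ = (MK / N) * ∫ x, μf x := integral_const_mul _ _
    _ ≤ (MK / N) * 1 := by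
        apply mul_le_mul_of_nonneg_left hμf_integral (by positivity)
    _ = MK / N := mul_one _
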